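/- Let H = Σ_a H_a where each H_a is positive semidefinite Hermitian with non-positive off-diagonal entries, and suppose Hψ = 0 for a non-negative unit vector ψ (hence H_a ψ = 0 for all a). Let Π_a project onto ker(H_a). If x is in the support of ψ and ⟨y|H_a|x⟩ < 0 for some a and some basis index y, then y is in the support of ψ and ψ(y)/ψ(x) = sqrt(⟨y|Π_a|y⟩/⟨x|Π_a|x⟩). -/

import Mathlib

open Matrix
open scoped ComplexOrder

/-- Lemma A: positivity propagation along a nonzero off-diagonal entry,
for nonnegative real kernel vectors. -/
lemma aux_kernelPos {N : ℕ} (A : Matrix (Fin N) (Fin N) ℂ)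
    (him : ∀ i j, (A i j).im = 0) (hoffd : ∀ i j, i ≠ j → (A i j).re ≤ 0)
    (w : Fin N → ℂ) (hw : A.mulVec w = 0)
    (hwr : ∀ z, (w z).im = 0 ∧ 0 ≤ (w z).re)
    (x y : Fin N) (hxy : (A y x).re < 0) (hx : 0 < (w x).re) : 0 < (w y).re := by
  by_cases hne : x = y
  · exact hne ▸ hx
  have h0 : ∑ j, (A y j).re * (w j).re = 0 := by
    have h1 : ∑ j, A y j * w j = 0 := congrFun hw y
    calc ∑ j, (A y j).re * (w j).re = (∑ j, A y j * w j).re := by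
          rw [Complex.re_sum]
          refine Finset.sum_congr rfl fun j _ => ?_
          rw [Complex.mul_re, him, (hwr j).1]; ring
      _ = 0 := by rw [h1]; simp
  set f : Fin N → ℝ := fun j => (A y j).re * (w j).re with hf
  have hx' : x ∈ Finset.univ.erase y := Finset.mem_erase.2 ⟨hne, Finset.mem_univ x⟩
  have hrest : ∑ j ∈ (Finset.univ.erase y).erase x, f j ≤ 0 := by
    refine Finset.sum_nonpos fun j hj => ?_
    have hjy : j ≠ y := (Finset.mem_erase.1 (Finset.mem_erase.1 hj).2).1
    exact mul_nonpos_of_nonpos_of_nonneg (hoffd y j (Ne.symm hjy)) (hwr j).2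
  have hfx : f x < 0 := mul_neg_of_neg_of_pos hxy hx
  have hsum1 : f x + ∑ j ∈ (Finset.univ.erase y).erase x, f j = ∑ j ∈ Finset.univ.erase y, f j :=
    Finset.add_sum_erase _ f hx'
  have hsum2 : f y + ∑ j ∈ Finset.univ.erase y, f j = ∑ j, f j :=
    Finset.add_sum_erase _ f (Finset.mem_univ y)
  have hfy : 0 < f y := by rw [hf] at hsum1 hsum2 ⊢; rw [h0] at hsum2; linarith
  rcases lt_or_eq_of_le (hwr y).2 with h | h
  · exact h
  · simp only [hf, ← h, mul_zero] at hfy; exact absurd hfy (lt_irrefl 0)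

/-- Quadratic form of a real vector against a real matrix, in terms of real parts. -/
lemma aux_quadRe {N : ℕ} (A : Matrix (Fin N) (Fin N) ℂ)
    (him : ∀ i j, (A i j).im = 0)
    (u : Fin N → ℂ) (hur : ∀ z, (u z).im = 0) :
    (star u ⬝ᵥ A.mulVec u).re = ∑ i, ∑ j, (A i j).re * ((u i).re * (u j).re) := by
  have expand : star u ⬝ᵥ A.mulVec u = ∑ i, ∑ j, star u i * (A i j * u j) := by
    unfold dotProduct Matrix.mulVec
    exact Finset.sum_congr rfl fun i _ => Finset.mul_sum _ _ _
  rw [expand, Complex.re_sum]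
  refine Finset.sum_congr rfl fun i _ => ?_
  rw [Complex.re_sum]
  refine Finset.sum_congr rfl fun j _ => ?_
  simp only [Pi.star_apply, Complex.star_def, Complex.mul_re, Complex.mul_im,
    Complex.conj_re, Complex.conj_im, him, hur]
  ring

/-- Lemma B: for a real kernel vector `u` of a PSD matrix with real entries and
nonpositive off-diagonal entries, the componentwise absolute value is also in the kernel. -/
lemma aux_absKernel {N : ℕ} (A : Matrix (Fin N) (Fin N) ℂ) (hpsd : A.PosSemidef)
    (him : ∀ i j, (A i j).im = 0) (hoffd : ∀ i j, i ≠ j → (A i j).re ≤ 0)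
    (u : Fin N → ℂ) (hu : A.mulVec u = 0) (hur : ∀ z, (u z).im = 0) :
    A.mulVec (fun z => ((|(u z).re| : ℝ) : ℂ)) = 0 := by
  set w : Fin N → ℂ := fun z => ((|(u z).re| : ℝ) : ℂ) with hwdef
  have hwr : ∀ z, (w z).im = 0 := fun z => by simp [hwdef]
  have hwre : ∀ z, (w z).re = |(u z).re| := fun z => by simp [hwdef]
  have hQu : (star u ⬝ᵥ A.mulVec u).re = 0 := by rw [hu]; simp
  have hle : (star w ⬝ᵥ A.mulVec w).re ≤ (star u ⬝ᵥ A.mulVec u).re := by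
    rw [aux_quadRe A him u hur, aux_quadRe A him w hwr]
    refine Finset.sum_le_sum fun i _ => Finset.sum_le_sum fun j _ => ?_
    rw [hwre, hwre]
    by_cases hij : i = j
    · subst hij; rw [abs_mul_abs_self]
    · have h1 : (u i).re * (u j).re ≤ |(u i).re| * |(u j).re| := by
        calc (u i).re * (u j).re ≤ |(u i).re * (u j).re| := le_abs_self _
          _ = |(u i).re| * |(u j).re| := abs_mul _ _
      exact mul_le_mul_of_nonpos_left h1 (hoffd i j hij)
  have hge : (0 : ℂ) ≤ star w ⬝ᵥ A.mulVec w := hpsd.dotProduct_mulVec_nonneg w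
  rw [Complex.nonneg_iff] at hge
  have hQw : star w ⬝ᵥ A.mulVec w = 0 := by
    apply Complex.ext
    · simp only [Complex.zero_re]; linarith [hge.1, hle, hQu]
    · simp [← hge.2]
  exact (hpsd.dotProduct_mulVec_zero_iff w).1 hQw

/-- Lemma C (real version): any real kernel vector is locally proportional to `ψ`
across a nonzero off-diagonal entry. -/
lemma aux_propReal {N : ℕ} (A : Matrix (Fin N) (Fin N) ℂ) (hpsd : A.PosSemidef)
    (him : ∀ i j, (A i j).im = 0) (hoffd : ∀ i j, i ≠ j → (A i j).re ≤ 0)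
    (ψ : Fin N → ℂ) (hψ : ∀ z, (ψ z).im = 0 ∧ 0 ≤ (ψ z).re)
    (hAψ : A.mulVec ψ = 0) (x y : Fin N) (hyx : (A y x).re < 0)
    (hx : 0 < (ψ x).re)
    (v : Fin N → ℂ) (hv : A.mulVec v = 0) (hvim : ∀ z, (v z).im = 0) :
    (ψ x).re * (v y).re = (ψ y).re * (v x).re := by
  have hxy' : (A x y).re < 0 := by
    have h := (hpsd.isHermitian.apply x y)
    have : (A x y).re = (A y x).re := by
      rw [← h]; simp [Complex.star_def]
    rw [this]; exact hyx
  set d : Fin N → ℂ := ψ x • v - v x • ψ with hddef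
  have hd : A.mulVec d = 0 := by
    rw [hddef, Matrix.mulVec_sub, Matrix.mulVec_smul, Matrix.mulVec_smul, hv, hAψ]
    simp
  have hdapp : ∀ z, d z = ψ x * v z - v x * ψ z := fun z => by simp [hddef]
  have hdim : ∀ z, (d z).im = 0 := by
    intro z
    rw [hdapp]
    simp [Complex.sub_im, Complex.mul_im, (hψ z).1, (hψ x).1, hvim z, hvim x]
  have hdx : (d x).re = 0 := by rw [hdapp]; simp [Complex.sub_re, Complex.mul_re]; ring
  set w : Fin N → ℂ := fun z => ((|(d z).re| : ℝ) : ℂ) with hwdef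
  have hw : A.mulVec w = 0 := aux_absKernel A hpsd him hoffd d hd hdim
  have key : ∀ e : Fin N → ℂ, A.mulVec e = 0 → (∀ z, (e z).im = 0 ∧ 0 ≤ (e z).re) →
      (e x).re = 0 → (e y).re = 0 := by
    intro e he her hex
    by_contra h
    have hey : 0 < (e y).re := lt_of_le_of_ne (her y).2 (Ne.symm h)
    have := aux_kernelPos A him hoffd e he her y x hxy' hey
    linarith
  have hplus : ((w + d) y).re = 0 := by
    apply key (w + d) (by rw [Matrix.mulVec_add, hw, hd]; simp)
    · intro z
      constructor
      · simp [Pi.add_apply, Complex.add_im, hwdef, hdim z]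
      · simp only [Pi.add_apply, Complex.add_re, hwdef, Complex.ofReal_re]
        have := neg_abs_le ((d z).re)
        linarith
    · simp only [Pi.add_apply, Complex.add_re, hwdef, Complex.ofReal_re, hdx]
      simp
  have hminus : ((w - d) y).re = 0 := by
    apply key (w - d) (by rw [Matrix.mulVec_sub, hw, hd]; simp)
    · intro z
      constructor
      · simp [Pi.sub_apply, Complex.sub_im, hwdef, hdim z]
      · simp only [Pi.sub_apply, Complex.sub_re, hwdef, Complex.ofReal_re]
        have := le_abs_self ((d z).re)
        linarith
    · simp only [Pi.sub_apply, Complex.sub_re, hwdef, Complex.ofReal_re, hdx]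
      simp
  have hdy : (d y).re = 0 := by
    simp only [Pi.add_apply, Complex.add_re, hwdef, Complex.ofReal_re] at hplus
    simp only [Pi.sub_apply, Complex.sub_re, hwdef, Complex.ofReal_re] at hminus
    linarith
  rw [hdapp] at hdy
  simp only [Complex.sub_re, Complex.mul_re, (hψ x).1, (hψ y).1, hvim x, hvim y] at hdy
  linarith

/-- Lemma C: any complex kernel vector is locally proportional to `ψ`. -/
lemma aux_propC {N : ℕ} (A : Matrix (Fin N) (Fin N) ℂ) (hpsd : A.PosSemidef)
    (him : ∀ i j, (A i j).im = 0) (hoffd : ∀ i j, i ≠ j → (A i j).re ≤ 0)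
    (ψ : Fin N → ℂ) (hψ : ∀ z, (ψ z).im = 0 ∧ 0 ≤ (ψ z).re)
    (hAψ : A.mulVec ψ = 0) (x y : Fin N) (hyx : (A y x).re < 0)
    (hx : 0 < (ψ x).re)
    (v : Fin N → ℂ) (hv : A.mulVec v = 0) :
    ψ x * v y = ψ y * v x := by
  have hvapp : ∀ i, ∑ j, A i j * v j = 0 := by
    intro i
    have := congrFun hv i
    simpa [Matrix.mulVec, dotProduct] using this
  -- real and imaginary parts of v are kernel vectors
  have hre_ker : A.mulVec (fun z => ((v z).re : ℂ)) = 0 := by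
    funext i
    have h := hvapp i
    have hre := congrArg Complex.re h
    have him' := congrArg Complex.im h
    rw [Complex.re_sum] at hre
    rw [Complex.im_sum] at him'
    simp only [Complex.mul_re, Complex.mul_im, him] at hre him'
    show (∑ j, A i j * ((v j).re : ℂ)) = 0
    apply Complex.ext
    · rw [Complex.re_sum]
      simp only [Complex.mul_re, Complex.ofReal_re, Complex.ofReal_im, mul_zero, sub_zero]
      simpa using hre
    · rw [Complex.im_sum]
      simp only [Complex.mul_im, Complex.ofReal_re, Complex.ofReal_im, mul_zero, zero_add,
        him, zero_mul, Complex.zero_im]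
      simp
  have him_ker : A.mulVec (fun z => ((v z).im : ℂ)) = 0 := by
    funext i
    have h := hvapp i
    have him' := congrArg Complex.im h
    rw [Complex.im_sum] at him'
    simp only [Complex.mul_im, him] at him'
    show (∑ j, A i j * ((v j).im : ℂ)) = 0
    apply Complex.ext
    · rw [Complex.re_sum]
      simp only [Complex.mul_re, Complex.ofReal_re, Complex.ofReal_im, mul_zero, sub_zero]
      simpa using him'
    · rw [Complex.im_sum]
      simp only [Complex.mul_im, Complex.ofReal_re, Complex.ofReal_im, mul_zero, zero_add,
        him, zero_mul, Complex.zero_im]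
      simp
  have h1 := aux_propReal A hpsd him hoffd ψ hψ hAψ x y hyx hx
      (fun z => ((v z).re : ℂ)) hre_ker (fun z => by simp)
  have h2 := aux_propReal A hpsd him hoffd ψ hψ hAψ x y hyx hx
      (fun z => ((v z).im : ℂ)) him_ker (fun z => by simp)
  simp only [Complex.ofReal_re] at h1 h2
  apply Complex.ext
  · simp only [Complex.mul_re, (hψ x).1, (hψ y).1, zero_mul, sub_zero]
    exact h1
  · simp only [Complex.mul_im, (hψ x).1, (hψ y).1, zero_mul, add_zero]
    exact h2

open scoped ComplexOrder in
/-- Let `H = ∑ a, H a` with each `H a` positive semidefinite Hermitian with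
real non-positive off-diagonal entries, and `ψ` a non-negative unit vector with `Hψ = 0`.
Let `P a` project onto `ker (H a)`. If `x` is in the support of `ψ` and `⟨y|H a|x⟩ < 0`,
then `y` is in the support of `ψ` and `ψ(y)/ψ(x) = sqrt(⟨y|P a|y⟩/⟨x|P a|x⟩)`. -/
theorem stmt_8 {N M : ℕ} (H : Fin M → Matrix (Fin N) (Fin N) ℂ)
    (hpsd : ∀ a, (H a).PosSemidef)
    (hoff : ∀ a x y, x ≠ y → ((H a) x y).im = 0 ∧ ((H a) x y).re ≤ 0)
    (ψ : Fin N → ℂ) (hψ : ∀ x, (ψ x).im = 0 ∧ 0 ≤ (ψ x).re)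
    (hunit : ∑ x, Complex.normSq (ψ x) = 1)
    (hground : (∑ a, H a).mulVec ψ = 0)
    (P : Fin M → Matrix (Fin N) (Fin N) ℂ)
    (hPherm : ∀ a, (P a).IsHermitian) (hPproj : ∀ a, P a * P a = P a)
    (hPker : ∀ a, ∀ v : Fin N → ℂ, (H a).mulVec v = 0 ↔ (P a).mulVec v = v)
    (a : Fin M) (x y : Fin N) (hx : 0 < (ψ x).re) (hneg : ((H a) y x).re < 0) :
    0 < (ψ y).re ∧
      (ψ y).re / (ψ x).re = Real.sqrt (((P a) y y).re / ((P a) x x).re) := by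
  -- entries of each H b are real
  have him : ∀ b i j, ((H b) i j).im = 0 := by
    intro b i j
    by_cases hij : i = j
    · subst hij
      have h := (hpsd b).isHermitian.apply i i
      have := congrArg Complex.im h
      simp only [Complex.star_def, Complex.conj_im] at this
      linarith
    · exact (hoff b i j hij).1
  have hoffd : ∀ b i j, i ≠ j → ((H b) i j).re ≤ 0 := fun b i j h => (hoff b i j h).2
  -- each H b annihilates ψ
  have hHaψ : ∀ b, (H b).mulVec ψ = 0 := by
    intro b
    have hsum : ∑ c, star ψ ⬝ᵥ (H c).mulVec ψ = 0 := by
      have hmv : (∑ c, H c).mulVec ψ = ∑ c, (H c).mulVec ψ :=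
        map_sum (Matrix.mulVec.addMonoidHomLeft ψ) H Finset.univ
      have : ∑ c, star ψ ⬝ᵥ (H c).mulVec ψ = star ψ ⬝ᵥ (∑ c, H c).mulVec ψ := by
        rw [hmv]
        unfold dotProduct
        simp only [Finset.sum_apply, Finset.mul_sum]
        exact Finset.sum_comm
      rw [this, hground, dotProduct_zero]
    have heach : star ψ ⬝ᵥ (H b).mulVec ψ = 0 := by
      have hnn : ∀ c ∈ Finset.univ, (0:ℂ) ≤ star ψ ⬝ᵥ (H c).mulVec ψ :=
        fun c _ => (hpsd c).dotProduct_mulVec_nonneg ψ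
      exact (Finset.sum_eq_zero_iff_of_nonneg hnn).1 hsum b (Finset.mem_univ b)
    exact ((hpsd b).dotProduct_mulVec_zero_iff ψ).1 heach
  -- first conjunct
  have hy : 0 < (ψ y).re := aux_kernelPos (H a) (him a) (hoffd a) ψ (hHaψ a) hψ x y hneg hx
  refine ⟨hy, ?_⟩
  -- columns of P a are kernel vectors of H a
  have hcol : ∀ z : Fin N, (H a).mulVec (fun i => (P a) i z) = 0 := by
    intro z
    apply (hPker a _).2
    funext i
    show ∑ j, (P a) i j * (P a) j z = (P a) i z
    rw [← Matrix.mul_apply, hPproj a]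
  have e1 : ψ x * (P a) y y = ψ y * (P a) x y :=
    aux_propC (H a) (hpsd a) (him a) (hoffd a) ψ hψ (hHaψ a) x y hneg hx
      (fun i => (P a) i y) (hcol y)
  have e2 : ψ x * (P a) y x = ψ y * (P a) x x :=
    aux_propC (H a) (hpsd a) (him a) (hoffd a) ψ hψ (hHaψ a) x y hneg hx
      (fun i => (P a) i x) (hcol x)
  -- diagonal entries of P a are real
  have hPdiag : ∀ z, ((P a) z z).im = 0 := by
    intro z
    have h := (hPherm a).apply z z
    have := congrArg Complex.im h
    simp only [Complex.star_def, Complex.conj_im] at this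
    linarith
  -- conjugate of e2
  have e2' : ψ x * (P a) x y = ψ y * (P a) x x := by
    have h := congrArg (starRingEnd ℂ) e2
    simp only [_root_.map_mul] at h
    rw [Complex.conj_eq_iff_im.2 (hψ x).1, Complex.conj_eq_iff_im.2 (hψ y).1,
      Complex.conj_eq_iff_im.2 (hPdiag x)] at h
    have hc : (starRingEnd ℂ) ((P a) y x) = (P a) x y := by
      have := (hPherm a).apply x y
      rwa [Complex.star_def] at this
    rw [hc] at h
    exact h
  -- the key complex identity
  have hkeyC : ψ x * ψ x * (P a) y y = ψ y * ψ y * (P a) x x := by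
    calc ψ x * ψ x * (P a) y y = ψ x * (ψ y * (P a) x y) := by rw [← e1]; ring
      _ = ψ y * (ψ x * (P a) x y) := by ring
      _ = ψ y * (ψ y * (P a) x x) := by rw [e2']
      _ = ψ y * ψ y * (P a) x x := by ring
  -- convert to reals
  have hkeyR : (ψ x).re * (ψ x).re * ((P a) y y).re
      = (ψ y).re * (ψ y).re * ((P a) x x).re := by
    have := congrArg Complex.re hkeyC
    simp only [Complex.mul_re, Complex.mul_im, (hψ x).1, (hψ y).1, hPdiag x, hPdiag y] at this
    linarith [this]
  -- (P a) x x has positive real part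
  have hPxx : 0 < ((P a) x x).re := by
    have hPψ : (P a).mulVec ψ = ψ := (hPker a ψ).1 (hHaψ a)
    have hsq : ((P a) x x) = ((∑ j, Complex.normSq ((P a) x j) : ℝ) : ℂ) := by
      have h := congrFun (congrFun (hPproj a) x) x
      rw [← h, Matrix.mul_apply, Complex.ofReal_sum]
      refine Finset.sum_congr rfl fun j _ => ?_
      have : (P a) j x = starRingEnd ℂ ((P a) x j) := by
        rw [← (hPherm a).apply j x]; simp [Complex.star_def]
      rw [this, Complex.mul_conj]
    by_contra hB
    push_neg at hB
    have hsum0 : ∑ j, Complex.normSq ((P a) x j) = 0 := by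
      have h1 : ((P a) x x).re = ∑ j, Complex.normSq ((P a) x j) := by
        rw [hsq]; simp
      have h2 : 0 ≤ ∑ j, Complex.normSq ((P a) x j) :=
        Finset.sum_nonneg fun j _ => Complex.normSq_nonneg _
      linarith
    have hrow : ∀ j, (P a) x j = 0 := by
      intro j
      have := (Finset.sum_eq_zero_iff_of_nonneg
        (fun j _ => Complex.normSq_nonneg ((P a) x j))).1 hsum0 j (Finset.mem_univ j)
      exact Complex.normSq_eq_zero.1 this
    have : ψ x = 0 := by
      have := congrFun hPψ x
      rw [← this]
      show ∑ j, (P a) x j * ψ j = 0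
      refine Finset.sum_eq_zero fun j _ => by rw [hrow j, zero_mul]
    rw [this] at hx
    simp at hx
  -- final real computation
  set p := (ψ x).re
  set q := (ψ y).re
  set B := ((P a) x x).re
  set Ay := ((P a) y y).re
  have hratio : Ay / B = (q / p) ^ 2 := by
    field_simp
    nlinarith [hkeyR]
  rw [hratio, Real.sqrt_sq (div_nonneg hy.le hx.le)]
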